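/- Every finite poset P on [n] (viewed as a subset of [[n]] closed under composition) has a unique highest cover set: there is a unique independent subset S of the cover set P^cov such that the integer partition ℓ_S (whose parts are the lengths j − i over (i,j) ∈ S, sorted decreasingly) is maximal in the lexicographic order among ℓ_T over all independent subsets T ⊆ P^cov. -/

import Mathlib

open scoped Classical

abbrev Mat (n : ℕ) (F : Type*) := Matrix (Fin n) (Fin n) F

/-- The set of positions strictly above the diagonal. -/
def PosUpper (n : ℕ) : Set (Fin n × Fin n) := {p | p.1 < p.2}

/-- A poset on `[n]`: a set of strictly-upper positions closed under composition. -/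
def IsPoset {n : ℕ} (P : Set (Fin n × Fin n)) : Prop :=
  P ⊆ PosUpper n ∧ ∀ i j k : Fin n, (i, j) ∈ P → (j, k) ∈ P → (i, k) ∈ P

/-- The normality condition for a pattern poset. -/
def NormalPoset {n : ℕ} (P : Set (Fin n × Fin n)) : Prop :=
  ∀ i j k l : Fin n, i ≤ j → j < k → k ≤ l → (i, l) ∉ P → (j, k) ∉ P

/-- The pattern group `U_P` (as a set of matrices). -/
def UPg {n : ℕ} {F : Type*} [Field F] (P : Set (Fin n × Fin n)) : Set (Mat n F) :=
  {g | (∀ i, g i i = 1) ∧ ∀ i j : Fin n, i ≠ j → (i, j) ∉ P → g i j = 0}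

/-- The algebra `n_P` of strictly upper triangular matrices supported on `P`. -/
def nPa {n : ℕ} {F : Type*} [Field F] (P : Set (Fin n × Fin n)) : Set (Mat n F) :=
  {X | ∀ i j : Fin n, (i, j) ∉ P → X i j = 0}

/-- The support of a matrix. -/
def msupp {n : ℕ} {F : Type*} [Field F] (X : Mat n F) : Set (Fin n × Fin n) :=
  {p | X p.1 p.2 ≠ 0}

/-- `F_q`-labeled set partitions: matrices in `n_P` with at most one nonzero entry
in each row and each column. -/
def SPa {n : ℕ} {F : Type*} [Field F] (P : Set (Fin n × Fin n)) : Set (Mat n F) :=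
  {X | X ∈ nPa P ∧ (∀ i j j' : Fin n, X i j ≠ 0 → X i j' ≠ 0 → j = j') ∧
       (∀ i i' j : Fin n, X i j ≠ 0 → X i' j ≠ 0 → i = i')}

/-- `coadj^L_Q(λ) = {(j,k) ∈ P : ∃ i, (i,k) ∈ supp(λ), (i,j) ∈ Q}`. -/
def coadjL {n : ℕ} {F : Type*} [Field F] (P Q : Set (Fin n × Fin n)) (lam : Mat n F) :
    Set (Fin n × Fin n) :=
  {p | p ∈ P ∧ ∃ i : Fin n, (i, p.2) ∈ msupp lam ∧ (i, p.1) ∈ Q}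

/-- `coadj^R_Q(λ) = {(i,j) ∈ P : ∃ k, (i,k) ∈ supp(λ), (j,k) ∈ Q}`. -/
def coadjR {n : ℕ} {F : Type*} [Field F] (P Q : Set (Fin n × Fin n)) (lam : Mat n F) :
    Set (Fin n × Fin n) :=
  {p | p ∈ P ∧ ∃ k : Fin n, (p.1, k) ∈ msupp lam ∧ (p.2, k) ∈ Q}

/-- `coadj_Q(λ) = coadj^L_Q(λ) ∪ coadj^R_Q(λ)`. -/
def coadjF {n : ℕ} {F : Type*} [Field F] (P Q : Set (Fin n × Fin n)) (lam : Mat n F) :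
    Set (Fin n × Fin n) := coadjL P Q lam ∪ coadjR P Q lam

/-- `coaux_P(λ) = coadj_{[[n]]}(λ) \ coadj_P(λ)`. -/
def coauxF {n : ℕ} {F : Type*} [Field F] (P : Set (Fin n × Fin n)) (lam : Mat n F) :
    Set (Fin n × Fin n) := coadjF P (PosUpper n) lam \ coadjF P P lam

/-- The set of covers of a poset `P`. -/
def covers {n : ℕ} (P : Set (Fin n × Fin n)) : Set (Fin n × Fin n) :=
  {p | p ∈ P ∧ ¬ ∃ j : Fin n, (p.1, j) ∈ P ∧ (j, p.2) ∈ P}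

/-- A set of positions is independent if no two distinct elements share a first
coordinate or a second coordinate. -/
def Indep {n : ℕ} (S : Finset (Fin n × Fin n)) : Prop :=
  ∀ p ∈ S, ∀ q ∈ S, p ≠ q → p.1 ≠ q.1 ∧ p.2 ≠ q.2

/-- The weakly decreasing sequence of lengths `j - i` over `(i,j) ∈ S`, padded with
zeros. -/
noncomputable def lenSeq {n : ℕ} (S : Finset (Fin n × Fin n)) : ℕ → ℕ :=
  fun m => (((S.val.map fun p => (p.2 : ℕ) - (p.1 : ℕ)).sort (· ≤ ·)).reverse.getD m 0)

/-- Lexicographic comparison of integer sequences. -/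
def lexGe (f g : ℕ → ℕ) : Prop :=
  f = g ∨ ∃ m : ℕ, (∀ i < m, f i = g i) ∧ g m < f m

/-- `S` is a highest cover set of the poset `P`. -/
def IsHighestCoverSet {n : ℕ} (P : Set (Fin n × Fin n)) (S : Finset (Fin n × Fin n)) : Prop :=
  ↑S ⊆ covers P ∧ Indep S ∧
    ∀ T : Finset (Fin n × Fin n), ↑T ⊆ covers P → Indep T → lexGe (lenSeq S) (lenSeq T)

/-- `P` decomposes into chains: there is a partition of `[n]` (given by a coloring)
such that `P` consists exactly of the pairs `i < j` lying in a common part. -/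
def DecomposesIntoChains {n : ℕ} (P : Set (Fin n × Fin n)) : Prop :=
  ∃ c : Fin n → Fin n, ∀ i j : Fin n, i < j → ((i, j) ∈ P ↔ c i = c j)

/-- `Q` is a `P`-representative poset. -/
def PRep {n : ℕ} (P Q : Set (Fin n × Fin n)) : Prop :=
  Q ⊆ P ∧ ∀ S : Finset (Fin n × Fin n), IsHighestCoverSet Q S →
    (∀ p ∈ S, ∀ j : Fin n, (p.1, j) ∈ covers Q → (j, p.2) ∉ P) ∧
    (∀ p ∈ S, ∀ j : Fin n, (j, p.2) ∈ covers Q → (p.1, j) ∉ P)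


section HighestCoverAux

/-- The length (weight) of a position. -/
def wt {n : ℕ} (p : Fin n × Fin n) : ℕ := (p.2 : ℕ) - (p.1 : ℕ)

/-- Number of elements of `S` of weight at least `v`. -/
noncomputable def cnt {n : ℕ} (v : ℕ) (S : Finset (Fin n × Fin n)) : ℕ :=
  (S.filter fun e => v ≤ wt e).card

lemma list_bridge : ∀ (r : List ℕ), r.Pairwise (· ≥ ·) → ∀ v, 1 ≤ v → ∀ m,
    (v ≤ r.getD m 0 ↔ m < (r.filter (fun x => decide (v ≤ x))).length) := by
  intro r
  induction r with
  | nil => intro _ v hv m; simp; omega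
  | cons a t ih =>
    intro hs v hv m
    obtain ⟨ha, ht⟩ := List.pairwise_cons.mp hs
    by_cases hva : v ≤ a
    · cases m with
      | zero => simp [List.getD, hva]
      | succ m =>
        have := ih ht v hv m
        rw [List.getD_cons_succ]
        rw [this]
        have : (a :: t).filter (fun x => decide (v ≤ x)) = a :: t.filter (fun x => decide (v ≤ x)) := by
          simp [List.filter_cons, hva]
        rw [this, List.length_cons]
        omega
    · have h0 : (t.filter (fun x => decide (v ≤ x))) = [] := by
        rw [List.filter_eq_nil_iff]
        intro x hx
        have := ha x hx
        simp; omega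
      have hgd : (a :: t).getD m 0 ≤ a := by
        rcases Nat.lt_or_ge m (a :: t).length with h | h
        · rw [List.getD_eq_getElem _ _ h]
          have := List.getElem_mem h
          rcases List.mem_cons.mp this with h' | h'
          · omega
          · exact ha _ h'
        · rw [List.getD_eq_default _ _ h]; omega
      have : (a :: t).filter (fun x => decide (v ≤ x)) = [] := by
        simp [List.filter_cons, hva, h0]
      rw [this]
      simp only [List.length_nil]
      omega

lemma cnt_bridge {n : ℕ} (S : Finset (Fin n × Fin n)) (v : ℕ) (hv : 1 ≤ v) (m : ℕ) :
    v ≤ lenSeq S m ↔ m < cnt v S := by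
  set l := (S.val.map fun p : Fin n × Fin n => (p.2 : ℕ) - (p.1 : ℕ)).sort (· ≤ ·) with hl
  have hsort : l.reverse.Pairwise (· ≥ ·) := by
    rw [List.pairwise_reverse]
    have := Multiset.pairwise_sort (r := (· ≤ ·)) (s := S.val.map fun p : Fin n × Fin n => (p.2 : ℕ) - (p.1 : ℕ))
    exact this.imp (fun h => h)
  have hb := list_bridge l.reverse hsort v hv m
  have h1 : lenSeq S m = l.reverse.getD m 0 := rfl
  rw [h1, hb]
  have h2 : (l.reverse.filter (fun x => decide (v ≤ x))).length = cnt v S := by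
    rw [List.filter_reverse, List.length_reverse]
    have h3 : (l.filter (fun x => decide (v ≤ x))).length = l.countP (fun x => decide (v ≤ x)) :=
      List.countP_eq_length_filter.symm
    rw [h3]
    have h4 : Multiset.countP (fun x => v ≤ x) (l : Multiset ℕ) = l.countP (fun x => decide (v ≤ x)) := by
      simp [Multiset.coe_countP]
    rw [← h4, hl, Multiset.sort_eq, Multiset.countP_map]
    rw [cnt, Finset.card_filter]
    simp [Multiset.countP_eq_card_filter, Finset.sum_boole, wt]
    exact Finset.card_filter (fun i : Fin n × Fin n => v ≤ (i.2 : ℕ) - (i.1 : ℕ)) S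
  rw [h2]

variable {n : ℕ} {P : Set (Fin n × Fin n)}

/-- The greedy highest cover set construction: `gB P k` collects all covers of weight
greater than `n - k`, chosen greedily from the longest down. -/
noncomputable def gB (P : Set (Fin n × Fin n)) : ℕ → Finset (Fin n × Fin n)
  | 0 => ∅
  | (k+1) => gB P k ∪ Finset.univ.filter
      (fun e => e ∈ covers P ∧ wt e = n - k ∧ ∀ f ∈ gB P k, e.1 ≠ f.1 ∧ e.2 ≠ f.2)

lemma covers_pos (hP : IsPoset P) {e : Fin n × Fin n} (he : e ∈ covers P) :
    (e.1 : ℕ) < (e.2 : ℕ) := hP.1 he.1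

lemma wt_pos (hP : IsPoset P) {e : Fin n × Fin n} (he : e ∈ covers P) : 1 ≤ wt e := by
  have := covers_pos hP he; unfold wt; omega

lemma wt_lt {e : Fin n × Fin n} : wt e < n := by
  have := e.2.isLt; unfold wt; omega

/-- Equal-weight covers sharing a coordinate are equal. -/
lemma eq_of_shared (hP : IsPoset P) {e f : Fin n × Fin n} (he : e ∈ covers P)
    (hf : f ∈ covers P) (hw : wt e = wt f) (h : e.1 = f.1 ∨ e.2 = f.2) : e = f := by
  have h1 := covers_pos hP he
  have h2 := covers_pos hP hf
  unfold wt at hw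
  rcases h with h | h
  · have : (e.1 : ℕ) = (f.1 : ℕ) := by rw [h]
    have : (e.2 : ℕ) = (f.2 : ℕ) := by omega
    exact Prod.ext h (Fin.val_injective this)
  · have : (e.2 : ℕ) = (f.2 : ℕ) := by rw [h]
    have : (e.1 : ℕ) = (f.1 : ℕ) := by omega
    exact Prod.ext (Fin.val_injective this) h

lemma gB_subset_covers : ∀ k, ↑(gB P k) ⊆ covers P := by
  intro k
  induction k with
  | zero => simp [gB]
  | succ k ih =>
    intro e he
    rcases Finset.mem_union.mp he with h | h
    · exact ih h
    · exact (Finset.mem_filter.mp h).2.1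

lemma gB_wt (hP : IsPoset P) : ∀ k, ∀ e ∈ gB P k, n - k < wt e := by
  intro k
  induction k with
  | zero => simp [gB]
  | succ k ih =>
    intro e he
    rcases Finset.mem_union.mp he with h | h
    · have := ih e h; omega
    · obtain ⟨-, hc, hw, -⟩ := Finset.mem_filter.mp h
      have := wt_pos hP hc
      omega

lemma gB_mono {k k' : ℕ} (h : k ≤ k') : gB P k ⊆ gB P k' := by
  induction k' with
  | zero => rw [Nat.le_zero.mp h]
  | succ k' ih =>
    rcases Nat.lt_or_ge k (k'+1) with h' | h'
    · exact (ih (by omega)).trans Finset.subset_union_left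
    · rw [Nat.le_antisymm h h']

lemma gB_indep (hP : IsPoset P) : ∀ k, Indep (gB P k) := by
  intro k
  induction k with
  | zero => intro p hp; simp [gB] at hp
  | succ k ih =>
    intro p hp q hq hne
    rcases Finset.mem_union.mp hp with h1 | h1 <;> rcases Finset.mem_union.mp hq with h2 | h2
    · exact ih p h1 q h2 hne
    · obtain ⟨-, hc, hw, hcompat⟩ := Finset.mem_filter.mp h2
      have := hcompat p h1
      exact ⟨this.1.symm, this.2.symm⟩
    · obtain ⟨-, hc, hw, hcompat⟩ := Finset.mem_filter.mp h1
      exact hcompat q h2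
    · obtain ⟨-, hc1, hw1, -⟩ := Finset.mem_filter.mp h1
      obtain ⟨-, hc2, hw2, -⟩ := Finset.mem_filter.mp h2
      constructor
      · intro hcon; exact hne (eq_of_shared hP hc1 hc2 (hw1.trans hw2.symm) (Or.inl hcon))
      · intro hcon; exact hne (eq_of_shared hP hc1 hc2 (hw1.trans hw2.symm) (Or.inr hcon))

lemma gB_filter (hP : IsPoset P) {k k' : ℕ} (h : k ≤ k') :
    (gB P k').filter (fun e => n - k < wt e) = gB P k := by
  induction k' with
  | zero =>
    rw [Nat.le_zero.mp h]
    simp [gB]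
  | succ k' ih =>
    rcases Nat.lt_or_ge k (k'+1) with h' | h'
    · have ihh := ih (by omega)
      show (gB P k' ∪ _).filter _ = _
      rw [Finset.filter_union, ihh]
      have : (Finset.univ.filter
          (fun e => e ∈ covers P ∧ wt e = n - k' ∧ ∀ f ∈ gB P k', e.1 ≠ f.1 ∧ e.2 ≠ f.2)).filter
          (fun e => n - k < wt e) = ∅ := by
        rw [Finset.filter_eq_empty_iff]
        intro e he
        obtain ⟨-, hc, hw, -⟩ := Finset.mem_filter.mp he
        have hk : k ≤ k' := by omega
        omega
      rw [this, Finset.union_empty]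
    · have : k = k' + 1 := by omega
      subst this
      apply Finset.filter_true_of_mem
      intro e he
      exact gB_wt hP _ e he

/-- Greedy step: if `T` matches `gB` above weight `n-k`, its part above `n-(k+1)` is
inside `gB (k+1)`. -/
lemma greedy_step (hP : IsPoset P) {T : Finset (Fin n × Fin n)} (hTsub : ↑T ⊆ covers P)
    (hTind : Indep T) {k : ℕ} (hQ : T.filter (fun e => n - k < wt e) = gB P k) :
    T.filter (fun e => n - (k+1) < wt e) ⊆ gB P (k+1) := by
  intro e he
  obtain ⟨heT, hew⟩ := Finset.mem_filter.mp he
  rcases Nat.lt_or_ge (n - k) (wt e) with h | h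
  · exact gB_mono (Nat.le_succ k) (hQ ▸ Finset.mem_filter.mpr ⟨heT, h⟩)
  · have hwk : wt e = n - k := by
      have := wt_pos hP (hTsub heT); omega
    apply Finset.mem_union_right
    refine Finset.mem_filter.mpr ⟨Finset.mem_univ _, hTsub heT, hwk, ?_⟩
    intro f hf
    rw [← hQ] at hf
    obtain ⟨hfT, hfw⟩ := Finset.mem_filter.mp hf
    have hne : e ≠ f := by intro hcon; subst hcon; omega
    exact hTind e heT f hfT hne

lemma lex_of_cnt (S T : Finset (Fin n × Fin n)) (w : ℕ) (hw : 1 ≤ w)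
    (hlt : cnt w T < cnt w S) (heq : ∀ v, w < v → cnt v S = cnt v T) :
    ∃ m, (∀ i < m, lenSeq S i = lenSeq T i) ∧ lenSeq T m < lenSeq S m := by
  refine ⟨cnt w T, ?_, ?_⟩
  · intro i hi
    have hTge : w ≤ lenSeq T i := (cnt_bridge T w hw i).mpr hi
    have hSge : w ≤ lenSeq S i := (cnt_bridge S w hw i).mpr (hi.trans hlt)
    by_contra hneq
    rcases Nat.lt_or_ge (lenSeq S i) (lenSeq T i) with h | h
    · have hv : w < lenSeq T i := lt_of_le_of_lt hSge h
      have h1 : i < cnt (lenSeq T i) T := (cnt_bridge T _ (by omega) i).mp le_rfl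
      rw [← heq _ hv] at h1
      have h2 := (cnt_bridge S _ (by omega : 1 ≤ lenSeq T i) i).mpr h1
      omega
    · have h' : lenSeq T i < lenSeq S i := lt_of_le_of_ne h fun hc => hneq hc.symm
      have hv : w < lenSeq S i := lt_of_le_of_lt hTge h'
      have h1 : i < cnt (lenSeq S i) S := (cnt_bridge S _ (by omega) i).mp le_rfl
      rw [heq _ hv] at h1
      have h2 := (cnt_bridge T _ (by omega : 1 ≤ lenSeq S i) i).mpr h1
      omega
  · have h1 : w ≤ lenSeq S (cnt w T) := (cnt_bridge S w hw _).mpr hlt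
    have h2 : ¬ w ≤ lenSeq T (cnt w T) := by
      intro h
      have := (cnt_bridge T w hw _).mp h
      omega
    omega

lemma lexGt_asymm {f g : ℕ → ℕ}
    (h1 : ∃ m, (∀ i < m, f i = g i) ∧ g m < f m) (h2 : lexGe g f) : False := by
  obtain ⟨m, hm, hlt⟩ := h1
  rcases h2 with h | ⟨m', hm', hlt'⟩
  · rw [h] at hlt; omega
  · rcases Nat.lt_trichotomy m m' with h | h | h
    · have := hm' m h; omega
    · subst h; omega
    · have := hm m' h; omega

lemma main_strict (hP : IsPoset P) (T : Finset (Fin n × Fin n)) (hTsub : ↑T ⊆ covers P)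
    (hTind : Indep T) (hne : T ≠ gB P n) :
    ∃ m, (∀ i < m, lenSeq (gB P n) i = lenSeq T i) ∧ lenSeq T m < lenSeq (gB P n) m := by
  have hwitness : ¬ (T.filter (fun e => n - n < wt e) = gB P n) := by
    have : T.filter (fun e => n - n < wt e) = T := by
      apply Finset.filter_true_of_mem
      intro e he
      have := wt_pos hP (hTsub he)
      omega
    rw [this]; exact hne
  have hex : ∃ k, ¬ (T.filter (fun e => n - k < wt e) = gB P k) := ⟨n, hwitness⟩
  set k0 := Nat.find hex with hk0
  have hk0n : k0 ≤ n := Nat.find_min' hex hwitness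
  have hk0pos : 0 < k0 := by
    rcases Nat.eq_zero_or_pos k0 with h | h
    swap
    · exact h
    · exfalso
      have hspec := Nat.find_spec hex
      rw [← hk0, h] at hspec
      apply hspec
      rw [show gB P 0 = (∅ : Finset (Fin n × Fin n)) from rfl]
      rw [Finset.filter_eq_empty_iff]
      intro e he
      have := wt_lt (e := e)
      omega
  have hQprev : T.filter (fun e => n - (k0 - 1) < wt e) = gB P (k0 - 1) := by
    by_contra hc
    exact absurd (Nat.find_min hex (by omega : k0 - 1 < k0)) (fun h => h hc)
  have hsubk0 : T.filter (fun e => n - k0 < wt e) ⊆ gB P k0 := by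
    have := greedy_step hP hTsub hTind hQprev
    rwa [show k0 - 1 + 1 = k0 by omega] at this
  have hneqk0 : T.filter (fun e => n - k0 < wt e) ≠ gB P k0 := Nat.find_spec hex
  have hcard : (T.filter (fun e => n - k0 < wt e)).card < (gB P k0).card :=
    Finset.card_lt_card (ssubset_of_subset_of_ne hsubk0 hneqk0)
  set w0 := n - k0 + 1 with hw0
  have hw0pos : 1 ≤ w0 := by omega
  have hfc : ∀ S : Finset (Fin n × Fin n), S.filter (fun e => n - k0 < wt e)
      = S.filter (fun e => w0 ≤ wt e) := by
    intro S; apply Finset.filter_congr; intro x _; constructor <;> intro <;> omega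
  have hlt : cnt w0 T < cnt w0 (gB P n) := by
    have hA : cnt w0 (gB P n) = (gB P k0).card := by
      rw [cnt, ← hfc, gB_filter hP hk0n]
    have hT : cnt w0 T = (T.filter (fun e => n - k0 < wt e)).card := by
      rw [cnt, ← hfc]
    omega
  have heq : ∀ v, w0 < v → cnt v (gB P n) = cnt v T := by
    intro v hv
    rcases Nat.lt_or_ge v n with hvn | hvn
    · set k := n + 1 - v with hk
      have hkk0 : k < k0 := by omega
      have hkn : k ≤ n := by omega
      have hQk : T.filter (fun e => n - k < wt e) = gB P k := by
        by_contra hc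
        exact absurd (Nat.find_min hex hkk0) (fun h => h hc)
      have hfc2 : ∀ S : Finset (Fin n × Fin n), S.filter (fun e => v ≤ wt e)
          = S.filter (fun e => n - k < wt e) := by
        intro S; apply Finset.filter_congr; intro x _; constructor <;> intro <;> omega
      rw [cnt, cnt, hfc2, hfc2, hQk, gB_filter hP hkn]
    · have hempty : ∀ S : Finset (Fin n × Fin n), ↑S ⊆ covers P →
          S.filter (fun e => v ≤ wt e) = ∅ := by
        intro S hS
        rw [Finset.filter_eq_empty_iff]
        intro e he
        have := wt_lt (e := e)
        omega
      rw [cnt, cnt, hempty _ (gB_subset_covers n), hempty _ hTsub]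
  exact lex_of_cnt _ _ w0 hw0pos hlt heq

end HighestCoverAux

/-- Every poset on `[n]` has a unique highest cover set. -/
theorem highest_cover_set_unique {n : ℕ} (P : Set (Fin n × Fin n)) (hP : IsPoset P) :
    ∃! S : Finset (Fin n × Fin n), IsHighestCoverSet P S := by
  have hAhigh : IsHighestCoverSet P (gB P n) := by
    refine ⟨gB_subset_covers n, gB_indep hP n, ?_⟩
    intro T hTsub hTind
    by_cases hne : T = gB P n
    · subst hne; exact Or.inl rfl
    · exact Or.inr (main_strict hP T hTsub hTind hne)
  refine ⟨gB P n, hAhigh, ?_⟩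
  intro S hS
  by_contra hne
  exact lexGt_asymm (main_strict hP S hS.1 hS.2.1 hne)
    (hS.2.2 (gB P n) (gB_subset_covers n) (gB_indep hP n))
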